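/- The skewed bivariate Birnbaum–Saunders density f(t₁,t₂) = 2·φ(a₁)·φ(a₂)·Φ(λa₁a₂)·∏_{j=1,2} [t_j^{-3/2}(t_j+β_j)/(2α_j√β_j)] integrates to 1 over (0,∞)², where a_j = (1/α_j)(√(t_j/β_j) − √(β_j/t_j)). -/

import Mathlib

open Real MeasureTheory

/-- Standard normal pdf. -/
noncomputable def phi (x : ℝ) : ℝ := (Real.sqrt (2 * Real.pi))⁻¹ * Real.exp (-x ^ 2 / 2)

/-- Standard normal cdf. -/
noncomputable def Phi (x : ℝ) : ℝ := ∫ t in Set.Iic x, phi t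

noncomputable def aj (a b t : ℝ) : ℝ := (1/a) * (Real.sqrt (t / b) - Real.sqrt (b / t))

/-- Skewed bivariate Birnbaum–Saunders density. -/
noncomputable def fSBVBS (a1 a2 b1 b2 l t1 t2 : ℝ) : ℝ :=
  2 * phi (aj a1 b1 t1) * phi (aj a2 b2 t2) * Phi (l * (aj a1 b1 t1) * (aj a2 b2 t2)) *
    (t1 ^ (-(3:ℝ)/2) * (t1 + b1) / (2 * a1 * Real.sqrt b1)) *
    (t2 ^ (-(3:ℝ)/2) * (t2 + b2) / (2 * a2 * Real.sqrt b2))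

/-! ### Auxiliary definitions -/

/-- Jacobian factor. -/
noncomputable def Jc (a b t : ℝ) : ℝ := t ^ (-(3:ℝ)/2) * (t + b) / (2 * a * Real.sqrt b)

/-- Inverse of the `aj` transformation: auxiliary quadratic root. -/
noncomputable def sinv (a x : ℝ) : ℝ := (a * x + Real.sqrt ((a * x) ^ 2 + 4)) / 2

/-- Inverse of the `aj` transformation. -/
noncomputable def rinv (a b x : ℝ) : ℝ := b * (sinv a x) ^ 2

/-! ### Properties of `phi` and `Phi` -/

lemma phi_pos (x : ℝ) : 0 < phi x := by
  unfold phi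
  have : 0 < Real.sqrt (2 * Real.pi) := Real.sqrt_pos.2 (by positivity)
  positivity

lemma phi_neg (x : ℝ) : phi (-x) = phi x := by simp [phi]

lemma continuous_phi : Continuous phi := by unfold phi; fun_prop

lemma phi_eq (x : ℝ) : phi x = (Real.sqrt (2 * Real.pi))⁻¹ * Real.exp (-(1/2) * x ^ 2) := by
  unfold phi; ring_nf

lemma integrable_phi : Integrable phi := by
  have h := (integrable_exp_neg_mul_sq (b := (1/2 : ℝ)) one_half_pos).const_mul
    ((Real.sqrt (2 * Real.pi))⁻¹)
  refine h.congr (Filter.Eventually.of_forall fun x => ?_)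
  rw [phi_eq]

lemma integral_phi : ∫ x, phi x = 1 := by
  have h : ∫ x, phi x = (Real.sqrt (2 * Real.pi))⁻¹ * ∫ x, Real.exp (-(1/2) * x ^ 2) := by
    rw [← integral_const_mul]
    exact integral_congr_ae (Filter.Eventually.of_forall fun x => phi_eq x)
  rw [h, integral_gaussian]
  have : Real.pi / (1/2) = 2 * Real.pi := by ring
  rw [this]
  have h2 : (0:ℝ) < Real.sqrt (2 * Real.pi) := Real.sqrt_pos.2 (by positivity)
  field_simp

lemma Phi_nonneg (x : ℝ) : 0 ≤ Phi x :=
  setIntegral_nonneg measurableSet_Iic fun t _ => (phi_pos t).le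

lemma Phi_mono : Monotone Phi := by
  intro x y hxy
  exact setIntegral_mono_set integrable_phi.integrableOn
    (Filter.Eventually.of_forall fun t => (phi_pos t).le)
    (HasSubset.Subset.eventuallyLE (Set.Iic_subset_Iic.2 hxy))

lemma measurable_Phi : Measurable Phi := Phi_mono.measurable

lemma Phi_add_Phi_neg (x : ℝ) : Phi x + Phi (-x) = 1 := by
  have h1 : Phi (-x) = ∫ t in Set.Ioi x, phi t := by
    have h := integral_comp_neg_Iic (-x) phi
    rw [neg_neg] at h
    rw [Phi, ← h]
    exact integral_congr_ae (Filter.Eventually.of_forall fun t => (phi_neg t).symm)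
  rw [Phi, h1]
  rw [intervalIntegral.integral_Iic_add_Ioi integrable_phi.integrableOn
    integrable_phi.integrableOn, integral_phi]

lemma Phi_neg_eq (x : ℝ) : Phi (-x) = 1 - Phi x := by
  have := Phi_add_Phi_neg x; linarith

lemma Phi_le_one (x : ℝ) : Phi x ≤ 1 := by
  have h := Phi_add_Phi_neg x
  have := Phi_nonneg (-x)
  linarith

/-! ### The change of variables -/

lemma measurable_aj (a b : ℝ) : Measurable (aj a b) := by unfold aj; fun_prop

lemma Jc_pos {a b t : ℝ} (ha : 0 < a) (hb : 0 < b) (ht : 0 < t) : 0 < Jc a b t := by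
  unfold Jc
  have h1 : 0 < t ^ (-(3:ℝ)/2) := Real.rpow_pos_of_pos ht _
  have h2 : 0 < Real.sqrt b := Real.sqrt_pos.2 hb
  positivity

lemma measurable_Jc (a b : ℝ) : Measurable (Jc a b) := by unfold Jc; measurability

lemma rpow_neg_three_halves {t : ℝ} (ht : 0 < t) :
    t ^ (-(3:ℝ)/2) = (t * Real.sqrt t)⁻¹ := by
  rw [show (-(3:ℝ)/2) = -(1 + 1/2) by norm_num, Real.rpow_neg ht.le,
    Real.rpow_add ht, Real.rpow_one, ← Real.sqrt_eq_rpow]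

lemma hasDerivAt_aj {a b : ℝ} (ha : 0 < a) (hb : 0 < b) {t : ℝ} (ht : 0 < t) :
    HasDerivAt (aj a b) (Jc a b t) t := by
  have hst : (0:ℝ) < Real.sqrt t := Real.sqrt_pos.2 ht
  have hsb : (0:ℝ) < Real.sqrt b := Real.sqrt_pos.2 hb
  have h1 : HasDerivAt Real.sqrt (1 / (2 * Real.sqrt t)) t := Real.hasDerivAt_sqrt ht.ne'
  have h2 : HasDerivAt (fun s => Real.sqrt s / Real.sqrt b)
      ((1 / (2 * Real.sqrt t)) / Real.sqrt b) t := h1.div_const _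
  have h3 : HasDerivAt (fun s => Real.sqrt b / Real.sqrt s)
      (Real.sqrt b * (-(1 / (2 * Real.sqrt t)) / (Real.sqrt t) ^ 2)) t := by
    have := (h1.inv hst.ne').const_mul (Real.sqrt b)
    simpa [div_eq_mul_inv] using this
  have h4 := (h2.sub h3).const_mul (1/a)
  have heq : (fun s => (1/a) * (Real.sqrt s / Real.sqrt b - Real.sqrt b / Real.sqrt s))
      =ᶠ[nhds t] aj a b := by
    filter_upwards [eventually_gt_nhds ht] with s hs
    rw [aj, Real.sqrt_div hs.le, Real.sqrt_div hb.le]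
  have h5 := h4.congr_of_eventuallyEq heq.symm
  refine HasDerivAt.congr_deriv h5 (Eq.symm ?_)
  rw [Jc, rpow_neg_three_halves ht]
  have ht2 : Real.sqrt t * Real.sqrt t = t := Real.mul_self_sqrt ht.le
  have hb2 : Real.sqrt b * Real.sqrt b = b := Real.mul_self_sqrt hb.le
  field_simp
  linear_combination b * ht2 - t * hb2

lemma sinv_pos (a x : ℝ) : 0 < sinv a x := by
  unfold sinv
  have h : |a * x| < Real.sqrt ((a * x) ^ 2 + 4) := by
    rw [← Real.sqrt_sq_eq_abs]
    exact Real.sqrt_lt_sqrt (sq_nonneg _) (by linarith)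
  have := neg_abs_le (a * x)
  linarith

lemma sinv_spec (a x : ℝ) : sinv a x - (sinv a x)⁻¹ = a * x := by
  have hs := sinv_pos a x
  have hd : Real.sqrt ((a * x) ^ 2 + 4) ^ 2 = (a * x) ^ 2 + 4 :=
    Real.sq_sqrt (by positivity)
  have key : sinv a x * sinv a x - 1 = a * x * sinv a x := by
    rw [sinv]; linear_combination hd / 4
  have h2 : sinv a x - (sinv a x)⁻¹ = (sinv a x * sinv a x - 1) / sinv a x := by
    field_simp
  rw [h2, key, mul_div_assoc, div_self hs.ne', mul_one]

lemma aj_rinv {a b : ℝ} (ha : 0 < a) (hb : 0 < b) (x : ℝ) : aj a b (rinv a b x) = x := by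
  have hs := sinv_pos a x
  rw [rinv, aj]
  have h1 : b * sinv a x ^ 2 / b = sinv a x ^ 2 := by field_simp
  have h2 : b / (b * sinv a x ^ 2) = (sinv a x ^ 2)⁻¹ := by
    rw [div_mul_eq_div_div, div_self hb.ne', one_div]
  rw [h1, h2, Real.sqrt_inv, Real.sqrt_sq hs.le]
  rw [sinv_spec a x]
  field_simp

lemma rinv_pos {a b : ℝ} (hb : 0 < b) (x : ℝ) : 0 < rinv a b x := by
  have := sinv_pos a x
  rw [rinv]; positivity

lemma rinv_aj {a b : ℝ} (ha : 0 < a) (hb : 0 < b) {t : ℝ} (ht : 0 < t) :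
    rinv a b (aj a b t) = t := by
  set u := Real.sqrt (t / b) with hu_def
  have hu : 0 < u := Real.sqrt_pos.2 (div_pos ht hb)
  have hu2 : u ^ 2 = t / b := Real.sq_sqrt (div_pos ht hb).le
  have haj : a * aj a b t = u - u⁻¹ := by
    rw [aj]
    have hbt : b / t = (t / b)⁻¹ := by field_simp
    rw [hbt, Real.sqrt_inv, ← hu_def]
    field_simp
  have hsq : (a * aj a b t) ^ 2 + 4 = (u + u⁻¹) ^ 2 := by
    rw [haj]; field_simp; ring
  have hsinv : sinv a (aj a b t) = u := by
    rw [sinv, mul_comm a (aj a b t), ← mul_comm a (aj a b t), hsq,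
      Real.sqrt_sq (by positivity), haj]
    field_simp
    ring
  rw [rinv, hsinv, hu2]
  field_simp

lemma aj_injOn {a b : ℝ} (ha : 0 < a) (hb : 0 < b) :
    Set.InjOn (aj a b) (Set.Ioi 0) := by
  intro s hs t ht h
  have := rinv_aj ha hb (Set.mem_Ioi.1 hs)
  rw [h, rinv_aj ha hb (Set.mem_Ioi.1 ht)] at this
  exact this.symm

lemma aj_image {a b : ℝ} (ha : 0 < a) (hb : 0 < b) :
    aj a b '' Set.Ioi 0 = Set.univ := by
  apply Set.eq_univ_of_forall
  intro x
  exact ⟨rinv a b x, Set.mem_Ioi.2 (rinv_pos hb x), aj_rinv ha hb x⟩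

/-- Change of variables: substitution `x = aj a b t`. -/
lemma integral_aj_subst {a b : ℝ} (ha : 0 < a) (hb : 0 < b) (g : ℝ → ℝ) :
    ∫ t in Set.Ioi (0:ℝ), Jc a b t * g (aj a b t) = ∫ x, g x := by
  have h := integral_image_eq_integral_abs_deriv_smul measurableSet_Ioi
    (f' := Jc a b)
    (fun t ht => (hasDerivAt_aj ha hb (Set.mem_Ioi.1 ht)).hasDerivWithinAt)
    (aj_injOn ha hb) g
  rw [aj_image ha hb, Measure.restrict_univ] at h
  rw [h]
  refine setIntegral_congr_fun measurableSet_Ioi fun t ht => ?_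
  rw [smul_eq_mul, abs_of_pos (Jc_pos ha hb (Set.mem_Ioi.1 ht))]

/-- Transfer of integrability along the substitution. -/
lemma integrableOn_aj_subst {a b : ℝ} (ha : 0 < a) (hb : 0 < b) {g : ℝ → ℝ}
    (hg : Integrable g) :
    IntegrableOn (fun t => Jc a b t * g (aj a b t)) (Set.Ioi (0:ℝ)) := by
  have h := (integrableOn_image_iff_integrableOn_abs_deriv_smul measurableSet_Ioi
    (f' := Jc a b)
    (fun t ht => (hasDerivAt_aj ha hb (Set.mem_Ioi.1 ht)).hasDerivWithinAt)
    (aj_injOn ha hb) g).1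
  rw [aj_image ha hb] at h
  have h2 := h ((integrableOn_univ (f := g)).2 hg)
  refine h2.congr_fun (fun t ht => ?_) measurableSet_Ioi
  beta_reduce
  rw [smul_eq_mul, abs_of_pos (Jc_pos ha hb (Set.mem_Ioi.1 ht))]

/-! ### The one-dimensional skew-normal integral -/

noncomputable def Kfun (l x : ℝ) : ℝ := ∫ y, phi y * Phi (l * x * y)

lemma integrable_K_integrand (l x : ℝ) :
    Integrable (fun y => phi y * Phi (l * x * y)) := by
  refine integrable_phi.mono ?_ (Filter.Eventually.of_forall fun y => ?_)
  · exact (continuous_phi.measurable.mul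
      (measurable_Phi.comp (by fun_prop))).aestronglyMeasurable
  · have h1 := phi_pos y
    have h2 := Phi_nonneg (l * x * y)
    have h3 := Phi_le_one (l * x * y)
    rw [Real.norm_eq_abs, Real.norm_eq_abs, abs_of_nonneg (by positivity),
      abs_of_pos h1]
    nlinarith

lemma K_nonneg (l x : ℝ) : 0 ≤ Kfun l x :=
  integral_nonneg fun y => mul_nonneg (phi_pos y).le (Phi_nonneg _)

lemma K_le_one (l x : ℝ) : Kfun l x ≤ 1 := by
  rw [Kfun, ← integral_phi]
  refine integral_mono (integrable_K_integrand l x) integrable_phi fun y => ?_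
  have h1 := phi_pos y
  have h3 := Phi_le_one (l * x * y)
  nlinarith

lemma K_neg (l x : ℝ) : Kfun l (-x) = 1 - Kfun l x := by
  have h : ∀ y, phi y * Phi (l * -x * y) = phi y - phi y * Phi (l * x * y) := by
    intro y
    rw [show l * -x * y = -(l * x * y) by ring, Phi_neg_eq]
    ring
  rw [Kfun]
  rw [integral_congr_ae (Filter.Eventually.of_forall h),
    integral_sub integrable_phi (integrable_K_integrand l x), integral_phi, Kfun]

lemma stronglyMeasurable_K (l : ℝ) : StronglyMeasurable (Kfun l) := by
  have : StronglyMeasurable (fun p : ℝ × ℝ => phi p.2 * Phi (l * p.1 * p.2)) := by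
    refine Measurable.stronglyMeasurable ?_
    exact (continuous_phi.measurable.comp measurable_snd).mul
      (measurable_Phi.comp (by fun_prop))
  exact this.integral_prod_right'

lemma integrable_phiK (l : ℝ) : Integrable (fun x => phi x * Kfun l x) := by
  refine integrable_phi.mono ?_ (Filter.Eventually.of_forall fun x => ?_)
  · exact (continuous_phi.measurable.stronglyMeasurable.mul
      (stronglyMeasurable_K l)).aestronglyMeasurable
  · have h1 := phi_pos x
    have h2 := K_nonneg l x
    have h3 := K_le_one l x
    rw [Real.norm_eq_abs, Real.norm_eq_abs, abs_of_nonneg (by positivity),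
      abs_of_pos h1]
    nlinarith

lemma skew_normal_integral (l : ℝ) : ∫ x, 2 * phi x * Kfun l x = 1 := by
  have hneg : ∫ x, 2 * phi (-x) * Kfun l (-x) = ∫ x, 2 * phi x * Kfun l x := by
    have := (Measure.measurePreserving_neg (volume : Measure ℝ)).integral_comp
      (MeasurableEquiv.neg ℝ).measurableEmbedding (fun x => 2 * phi x * Kfun l x)
    exact this
  have heq : ∀ x, 2 * phi (-x) * Kfun l (-x) = 2 * phi x - 2 * phi x * Kfun l x := by
    intro x
    rw [phi_neg, K_neg]; ring
  rw [integral_congr_ae (Filter.Eventually.of_forall heq)] at hneg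
  have hsub : ∫ x, (2 * phi x - 2 * phi x * Kfun l x)
      = (∫ x, 2 * phi x) - ∫ x, 2 * phi x * Kfun l x := by
    have h1 : Integrable (fun x => 2 * phi x) := integrable_phi.const_mul 2
    have h2 : Integrable (fun x => 2 * phi x * Kfun l x) := by
      have := (integrable_phiK l).const_mul 2
      refine this.congr (Filter.Eventually.of_forall fun x => by ring)
    exact integral_sub h1 h2
  have h2phi : ∫ x, 2 * phi x = 2 := by
    rw [integral_const_mul, integral_phi]; norm_num
  rw [hsub, h2phi] at hneg
  have : ∀ x, 2 * phi x * Kfun l x = 2 * (phi x * Kfun l x) := fun x => by ring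
  linarith

/-! ### Main theorem -/

lemma fSBVBS_eq (a1 a2 b1 b2 l t1 t2 : ℝ) :
    fSBVBS a1 a2 b1 b2 l t1 t2 =
      2 * (Jc a1 b1 t1 * phi (aj a1 b1 t1)) * (Jc a2 b2 t2 * phi (aj a2 b2 t2)) *
        Phi (l * aj a1 b1 t1 * aj a2 b2 t2) := by
  rw [fSBVBS, Jc, Jc]; ring

theorem SBVBS_integrates_to_one (a1 a2 b1 b2 l : ℝ)
    (ha1 : 0 < a1) (ha2 : 0 < a2) (hb1 : 0 < b1) (hb2 : 0 < b2) :
    ∫ p in Set.Ioi (0:ℝ) ×ˢ Set.Ioi (0:ℝ), fSBVBS a1 a2 b1 b2 l p.1 p.2 = 1 := by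
  set h1 : ℝ → ℝ := fun t => Jc a1 b1 t * phi (aj a1 b1 t) with hh1
  set h2 : ℝ → ℝ := fun t => Jc a2 b2 t * phi (aj a2 b2 t) with hh2
  have hint1 : IntegrableOn h1 (Set.Ioi (0:ℝ)) := integrableOn_aj_subst ha1 hb1 integrable_phi
  have hint2 : IntegrableOn h2 (Set.Ioi (0:ℝ)) := integrableOn_aj_subst ha2 hb2 integrable_phi
  have hh1nn : ∀ t ∈ Set.Ioi (0:ℝ), 0 ≤ h1 t := fun t ht =>
    mul_nonneg (Jc_pos ha1 hb1 (Set.mem_Ioi.1 ht)).le (phi_pos _).le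
  have hh2nn : ∀ t ∈ Set.Ioi (0:ℝ), 0 ≤ h2 t := fun t ht =>
    mul_nonneg (Jc_pos ha2 hb2 (Set.mem_Ioi.1 ht)).le (phi_pos _).le
  -- integrability of the full density on the product set
  have hmeas : Measurable (fun p : ℝ × ℝ => fSBVBS a1 a2 b1 b2 l p.1 p.2) := by
    have e : (fun p : ℝ × ℝ => fSBVBS a1 a2 b1 b2 l p.1 p.2)
        = fun p : ℝ × ℝ => 2 * (Jc a1 b1 p.1 * phi (aj a1 b1 p.1)) *
          (Jc a2 b2 p.2 * phi (aj a2 b2 p.2)) *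
          Phi (l * aj a1 b1 p.1 * aj a2 b2 p.2) := by
      funext p; exact fSBVBS_eq a1 a2 b1 b2 l p.1 p.2
    rw [e]
    refine Measurable.mul ?_ (measurable_Phi.comp ?_)
    · exact (((((measurable_Jc a1 b1).comp measurable_fst).mul
        (continuous_phi.measurable.comp ((measurable_aj a1 b1).comp measurable_fst))).const_mul
        2).mul (((measurable_Jc a2 b2).comp measurable_snd).mul
        (continuous_phi.measurable.comp ((measurable_aj a2 b2).comp measurable_snd))))
    · exact (measurable_const.mul ((measurable_aj a1 b1).comp measurable_fst)).mul
        ((measurable_aj a2 b2).comp measurable_snd)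
  have hIntProd : IntegrableOn (fun p : ℝ × ℝ => fSBVBS a1 a2 b1 b2 l p.1 p.2)
      (Set.Ioi (0:ℝ) ×ˢ Set.Ioi (0:ℝ)) := by
    have hH : Integrable (fun p : ℝ × ℝ => (2 * h1 p.1) * h2 p.2)
        ((volume.restrict (Set.Ioi (0:ℝ))).prod (volume.restrict (Set.Ioi (0:ℝ)))) :=
      Integrable.mul_prod (hint1.const_mul 2) hint2
    rw [Measure.prod_restrict] at hH
    rw [IntegrableOn, Measure.volume_eq_prod]
    refine hH.mono (hmeas.aestronglyMeasurable) ?_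
    filter_upwards [ae_restrict_mem (measurableSet_Ioi.prod measurableSet_Ioi)] with p hp
    obtain ⟨hp1, hp2⟩ := hp
    have hj1 := Jc_pos ha1 hb1 (Set.mem_Ioi.1 hp1)
    have hj2 := Jc_pos ha2 hb2 (Set.mem_Ioi.1 hp2)
    have hphi1 := phi_pos (aj a1 b1 p.1)
    have hphi2 := phi_pos (aj a2 b2 p.2)
    have hPn := Phi_nonneg (l * aj a1 b1 p.1 * aj a2 b2 p.2)
    have hP1 := Phi_le_one (l * aj a1 b1 p.1 * aj a2 b2 p.2)
    rw [Real.norm_eq_abs, Real.norm_eq_abs, fSBVBS_eq]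
    rw [abs_of_nonneg (by positivity), abs_of_nonneg (by positivity)]
    simp only [hh1, hh2]
    nlinarith [mul_pos hj1 hphi1, mul_pos hj2 hphi2,
      mul_pos (mul_pos hj1 hphi1) (mul_pos hj2 hphi2)]
  -- Fubini
  rw [Measure.volume_eq_prod] at hIntProd ⊢
  rw [setIntegral_prod _ hIntProd]
  -- inner integral
  have hinner : ∀ t1 : ℝ, ∫ t2 in Set.Ioi (0:ℝ), fSBVBS a1 a2 b1 b2 l t1 t2
      = Jc a1 b1 t1 * ((fun x => ∫ y, 2 * phi x * phi y * Phi (l * x * y)) (aj a1 b1 t1)) := by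
    intro t1
    have step1 : ∫ t2 in Set.Ioi (0:ℝ), fSBVBS a1 a2 b1 b2 l t1 t2
        = ∫ t2 in Set.Ioi (0:ℝ), Jc a1 b1 t1 * (Jc a2 b2 t2 *
          ((fun y => 2 * phi (aj a1 b1 t1) * phi y * Phi (l * aj a1 b1 t1 * y))
            (aj a2 b2 t2))) := by
      refine integral_congr_ae (Filter.Eventually.of_forall fun t2 => ?_)
      rw [fSBVBS_eq]; ring
    rw [step1, integral_const_mul]
    congr 1
    exact integral_aj_subst ha2 hb2
      (fun y => 2 * phi (aj a1 b1 t1) * phi y * Phi (l * aj a1 b1 t1 * y))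
  rw [integral_congr_ae (Filter.Eventually.of_forall hinner)]
  have houter : ∫ t1 in Set.Ioi (0:ℝ), Jc a1 b1 t1 *
      ((fun x => ∫ y, 2 * phi x * phi y * Phi (l * x * y)) (aj a1 b1 t1))
      = ∫ x, ∫ y, 2 * phi x * phi y * Phi (l * x * y) :=
    integral_aj_subst ha1 hb1 (fun x => ∫ y, 2 * phi x * phi y * Phi (l * x * y))
  rw [houter]
  -- final one-dimensional computation
  have hG : ∀ x : ℝ, (∫ y, 2 * phi x * phi y * Phi (l * x * y)) = 2 * phi x * Kfun l x := by
    intro x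
    rw [Kfun, ← integral_const_mul]
    exact integral_congr_ae (Filter.Eventually.of_forall fun y => by ring)
  rw [integral_congr_ae (Filter.Eventually.of_forall hG)]
  exact skew_normal_integral l
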